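/- If A is a ∀⁺ type of System F and t ∈ |A|, then t is normalizable and β-equivalent to a closed λ-term. -/

import Mathlib

/-! Untyped λ-calculus (de Bruijn) and System F realizability semantics. -/

/-- Untyped λ-terms in de Bruijn notation. -/
inductive Lam : Type
  | var : ℕ → Lam
  | app : Lam → Lam → Lam
  | lam : Lam → Lam
deriving DecidableEq

namespace Lam

/-- Shift the free variables ≥ `d` up by one. -/
def lift (d : ℕ) : Lam → Lam
  | var n => if n < d then var n else var (n + 1)
  | app t u => app (lift d t) (lift d u)
  | lam t => lam (lift (d + 1) t)

/-- Capture-avoiding substitution of `u` for the variable `k` (de Bruijn). -/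
def subst : Lam → ℕ → Lam → Lam
  | var n, k, u => if n = k then u else if k < n then var (n - 1) else var n
  | app t s, k, u => app (subst t k u) (subst s k u)
  | lam t, k, u => lam (subst t (k + 1) (lift 0 u))

/-- Free variables of a term. -/
def fv : Lam → Finset ℕ
  | var n => {n}
  | app t u => fv t ∪ fv u
  | lam t => ((fv t).erase 0).image (· - 1)

/-- One-step β-reduction. -/
inductive Beta : Lam → Lam → Prop
  | beta (t u : Lam) : Beta (app (lam t) u) (subst t 0 u)
  | appL {t t' : Lam} (u : Lam) : Beta t t' → Beta (app t u) (app t' u)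
  | appR (t : Lam) {u u' : Lam} : Beta u u' → Beta (app t u) (app t u')
  | lam {t t' : Lam} : Beta t t' → Beta (lam t) (lam t')

/-- Many-step β-reduction. -/
def BetaStar : Lam → Lam → Prop := Relation.ReflTransGen Beta

/-- β-equivalence. -/
def BetaEq : Lam → Lam → Prop := Relation.EqvGen Beta

/-- One-step η-reduction. -/
inductive Eta : Lam → Lam → Prop
  | eta (t : Lam) : Eta (lam (app (lift 0 t) (var 0))) t
  | appL {t t' : Lam} (u : Lam) : Eta t t' → Eta (app t u) (app t' u)
  | appR (t : Lam) {u u' : Lam} : Eta u u' → Eta (app t u) (app t u')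
  | lam {t t' : Lam} : Eta t t' → Eta (lam t) (lam t')

/-- βη-equivalence. -/
def BetaEtaEq : Lam → Lam → Prop := Relation.EqvGen (fun t u => Beta t u ∨ Eta t u)

/-- One-step weak head reduction: contracts the weak head redex `(λ t) u`
possibly applied to further arguments. -/
inductive Whr : Lam → Lam → Prop
  | head (t u : Lam) : Whr (app (lam t) u) (subst t 0 u)
  | appL {t t' : Lam} (u : Lam) : Whr t t' → Whr (app t u) (app t' u)

/-- Many-step weak head reduction (`≻_f`). -/
def WhrStar : Lam → Lam → Prop := Relation.ReflTransGen Whr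

/-- A term is normal when it has no β-redex. -/
def Normal (t : Lam) : Prop := ∀ u, ¬ Beta t u

def Normalizable (t : Lam) : Prop := ∃ u, BetaStar t u ∧ Normal u

/-- `(t)v₁…vₘ`. -/
def appList (t : Lam) (l : List Lam) : Lam := l.foldl app t

end Lam

/-- A set of λ-terms is saturated when it is closed under weak-head-expansion. -/
def Saturated (G : Set Lam) : Prop := ∀ t u : Lam, Lam.WhrStar t u → u ∈ G → t ∈ G

/-- A set of λ-terms is β-saturated when it is closed under β-expansion. -/
def BetaSaturated (G : Set Lam) : Prop := ∀ t u : Lam, Lam.BetaStar t u → u ∈ G → t ∈ G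

/-- `G → G' = {u : ∀ t ∈ G, (u)t ∈ G'}`. -/
def arrowSet (G G' : Set Lam) : Set Lam := {u | ∀ t ∈ G, Lam.app u t ∈ G'}

/-- Types of System F (de Bruijn type variables). -/
inductive Ty : Type
  | var : ℕ → Ty
  | arr : Ty → Ty → Ty
  | all : Ty → Ty
deriving DecidableEq

namespace Ty

/-- Shift the free type variables ≥ `d` up by one. -/
def lift (d : ℕ) : Ty → Ty
  | var n => if n < d then var n else var (n + 1)
  | arr A B => arr (lift d A) (lift d B)
  | all A => all (lift (d + 1) A)

/-- Capture-avoiding substitution of the type `C` for the type variable `k`. -/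
def subst : Ty → ℕ → Ty → Ty
  | var n, k, C => if n = k then C else if k < n then var (n - 1) else var n
  | arr A B, k, C => arr (subst A k C) (subst B k C)
  | all A, k, C => all (subst A (k + 1) (lift 0 C))

/-- Free type variables. -/
def fv : Ty → Finset ℕ
  | var n => {n}
  | arr A B => fv A ∪ fv B
  | all A => ((fv A).erase 0).image (· - 1)

end Ty

mutual
  /-- ∀⁺ types: types with positive quantifiers. -/
  inductive PosTy : Ty → Prop
    | var (n : ℕ) : PosTy (Ty.var n)
    | arr {B A : Ty} : NegTy B → PosTy A → PosTy (Ty.arr B A)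
    | all {A : Ty} : PosTy A → 0 ∈ A.fv → PosTy (Ty.all A)
  /-- ∀⁻ types: types with negative quantifiers. -/
  inductive NegTy : Ty → Prop
    | var (n : ℕ) : NegTy (Ty.var n)
    | arr {B A : Ty} : PosTy B → NegTy A → NegTy (Ty.arr B A)
end

/-- Typing contexts: a partial assignment of types to (de Bruijn) term variables. -/
def Ctx : Type := ℕ → Option Ty

def Ctx.empty : Ctx := fun _ => none

def Ctx.cons (B : Ty) (Γ : Ctx) : Ctx := fun n =>
  match n with
  | 0 => some B
  | n + 1 => Γ n

/-- Shift all type variables of a context (used for ∀-introduction: the fresh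
type variable `0` does not occur in the shifted context). -/
def Ctx.liftTy (Γ : Ctx) : Ctx := fun n => (Γ n).map (Ty.lift 0)

/-- Curry-style typing of System F. -/
inductive TyJ : Ctx → Lam → Ty → Prop
  | var {Γ : Ctx} {x : ℕ} {A : Ty} : Γ x = some A → TyJ Γ (Lam.var x) A
  | lam {Γ : Ctx} {B C : Ty} {t : Lam} :
      TyJ (Ctx.cons B Γ) t C → TyJ Γ (Lam.lam t) (Ty.arr B C)
  | app {Γ : Ctx} {B C : Ty} {u v : Lam} :
      TyJ Γ u (Ty.arr B C) → TyJ Γ v B → TyJ Γ (Lam.app u v) C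
  | allI {Γ : Ctx} {A : Ty} {t : Lam} :
      TyJ (Ctx.liftTy Γ) t A → TyJ Γ t (Ty.all A)
  | allE {Γ : Ctx} {A : Ty} {t : Lam} (C : Ty) :
      TyJ Γ t (Ty.all A) → TyJ Γ t (Ty.subst A 0 C)

/-- System F0 : System F where ∀-elimination only instantiates by type variables. -/
inductive TyJ0 : Ctx → Lam → Ty → Prop
  | var {Γ : Ctx} {x : ℕ} {A : Ty} : Γ x = some A → TyJ0 Γ (Lam.var x) A
  | lam {Γ : Ctx} {B C : Ty} {t : Lam} :
      TyJ0 (Ctx.cons B Γ) t C → TyJ0 Γ (Lam.lam t) (Ty.arr B C)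
  | app {Γ : Ctx} {B C : Ty} {u v : Lam} :
      TyJ0 Γ u (Ty.arr B C) → TyJ0 Γ v B → TyJ0 Γ (Lam.app u v) C
  | allI {Γ : Ctx} {A : Ty} {t : Lam} :
      TyJ0 (Ctx.liftTy Γ) t A → TyJ0 Γ t (Ty.all A)
  | allE {Γ : Ctx} {A : Ty} {t : Lam} (Y : ℕ) :
      TyJ0 Γ t (Ty.all A) → TyJ0 Γ t (Ty.subst A 0 (Ty.var Y))

/-- Interpretations: assignments of sets of λ-terms to type variables. -/
def Interp : Type := ℕ → Set Lam

def Interp.cons (G : Set Lam) (I : Interp) : Interp := fun n =>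
  match n with
  | 0 => G
  | n + 1 => I n

/-- Interpretation of types, parameterized by the admissibility class `C` of
sets used to interpret type variables (e.g. `Saturated`). -/
def interpC (C : Set Lam → Prop) : Ty → Interp → Set Lam
  | Ty.var n, I => I n
  | Ty.arr A B, I => arrowSet (interpC C A I) (interpC C B I)
  | Ty.all A, I => ⋂ (G : Set Lam) (_ : C G), interpC C A (Interp.cons G I)

/-- Girard–Krivine interpretation `|A|_I` with saturated sets. -/
def interp : Ty → Interp → Set Lam := interpC Saturated

/-- `|A|`, the intersection of `|A|_I` over all admissible interpretations. -/
def SemC (C : Set Lam → Prop) (A : Ty) : Set Lam :=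
  {t | ∀ I : Interp, (∀ n, C (I n)) → t ∈ interpC C A I}

/-- `|A| = ⋂_I |A|_I` over interpretations into saturated sets. -/
def Sem (A : Ty) : Set Lam := SemC Saturated A

/-! ### Auxiliary development -/

namespace Lam

/-- Shift a renaming under a binder. -/
def sh (f : ℕ → ℕ) : ℕ → ℕ
  | 0 => 0
  | n + 1 => f n + 1

/-- Apply a renaming to a term. -/
def ren (f : ℕ → ℕ) : Lam → Lam
  | var n => var (f n)
  | app t u => app (ren f t) (ren f u)
  | lam t => lam (ren (sh f) t)

/-- The renaming implementing `lift d`. -/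
def lf (d : ℕ) : ℕ → ℕ := fun n => if n < d then n else n + 1

lemma sh_lf (d : ℕ) : sh (lf d) = lf (d + 1) := by
  funext n; cases n with
  | zero => simp [sh, lf]
  | succ n => simp only [sh, lf]; split <;> split <;> omega

lemma lift_eq_ren (t : Lam) : ∀ d, lift d t = ren (lf d) t := by
  induction t with
  | var n => intro d; simp only [lift, ren, lf]; split <;> rfl
  | app t u iht ihu => intro d; simp [lift, ren, iht, ihu]
  | lam t ih => intro d; simp [lift, ren, ih, sh_lf]

lemma ren_ren (t : Lam) : ∀ f g, ren f (ren g t) = ren (f ∘ g) t := by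
  induction t with
  | var n => intro f g; rfl
  | app t u iht ihu => intro f g; simp [ren, iht, ihu]
  | lam t ih =>
      intro f g; simp only [ren, ih]
      congr 1; apply congrArg (fun h => ren h t)
      funext n; cases n <;> simp [sh, Function.comp]

/-- The renaming implementing `subst · k (var y)`. -/
def sv (k y : ℕ) : ℕ → ℕ := fun n => if n = k then y else if n < k then n else n - 1

lemma sv_succ (k y : ℕ) : sh (sv k y) = sv (k + 1) (y + 1) := by
  funext n; cases n with
  | zero => simp [sh, sv]
  | succ n => simp only [sh, sv]; split_ifs <;> omega

lemma subst_var_eq_ren (t : Lam) : ∀ k y, subst t k (var y) = ren (sv k y) t := by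
  induction t with
  | var n =>
      intro k y; simp only [subst, ren, sv]
      split_ifs <;> first | rfl | omega
  | app t u iht ihu => intro k y; simp [subst, ren, iht, ihu]
  | lam t ih =>
      intro k y
      have hl : lift 0 (var y) = var (y + 1) := by simp [lift]
      simp [subst, ren, hl, ih, sv_succ]

/-- Iterated shift. -/
def upn : ℕ → (ℕ → ℕ) → ℕ → ℕ
  | 0, f => f
  | k + 1, f => sh (upn k f)

lemma upn_lt (f : ℕ → ℕ) : ∀ k m, m < k → upn k f m = m := by
  intro k
  induction k with
  | zero => omega
  | succ k ih =>
      intro m hm; cases m with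
      | zero => rfl
      | succ m => simp only [upn, sh]; rw [ih m (by omega)]

lemma upn_ge (f : ℕ → ℕ) : ∀ k m, k ≤ m → upn k f m = f (m - k) + k := by
  intro k
  induction k with
  | zero => intro m _; simp [upn]
  | succ k ih =>
      intro m hm; cases m with
      | zero => omega
      | succ m =>
          simp only [upn, sh]
          rw [ih m (by omega)]
          have e : m + 1 - (k + 1) = m - k := by omega
          rw [e]
          omega

lemma ren_lift0 (u : Lam) (g : ℕ → ℕ) : ren (sh g) (lift 0 u) = lift 0 (ren g u) := by
  rw [lift_eq_ren, lift_eq_ren, ren_ren, ren_ren]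
  apply congrArg (fun h => ren h u)
  funext n; simp [Function.comp, sh, lf]

lemma ren_subst_upn (t : Lam) :
    ∀ k f u, ren (upn k f) (subst t k u) = subst (ren (upn (k + 1) f) t) k (ren (upn k f) u) := by
  induction t with
  | var n =>
      intro k f u
      by_cases h1 : n = k
      · subst h1
        have h2 : upn (n + 1) f n = n := upn_lt f (n + 1) n (by omega)
        simp [subst, ren, h2]
      · by_cases h2 : k < n
        · have e1 : upn k f (n - 1) = f (n - 1 - k) + k := upn_ge f k (n - 1) (by omega)
          have e2 : upn (k + 1) f n = f (n - (k + 1)) + (k + 1) := upn_ge f (k + 1) n (by omega)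
          have e3 : n - 1 - k = n - (k + 1) := by omega
          simp only [subst, ren, if_neg h1, if_pos h2, e1, e2, e3]
          rw [if_neg (by omega : ¬ (f (n - (k + 1)) + (k + 1) = k)),
            if_pos (by omega : k < f (n - (k + 1)) + (k + 1))]
          congr 1
        · have hn : n < k := by omega
          have e1 : upn k f n = n := upn_lt f k n hn
          have e2 : upn (k + 1) f n = n := upn_lt f (k + 1) n (by omega)
          simp only [subst, ren, e1, e2, if_neg h1, if_neg h2]
  | app t u iht ihu => intro k f u; simp [subst, ren, iht, ihu]
  | lam t ih =>
      intro k f u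
      simp only [subst, ren]
      have : sh (upn k f) = upn (k + 1) f := rfl
      rw [this]
      rw [ih (k + 1) f (lift 0 u)]
      have : ren (upn (k + 1) f) (lift 0 u) = lift 0 (ren (upn k f) u) := ren_lift0 u (upn k f)
      rw [this]
      rfl

lemma ren_subst0 (t u : Lam) (f : ℕ → ℕ) :
    ren f (subst t 0 u) = subst (ren (sh f) t) 0 (ren f u) :=
  ren_subst_upn t 0 f u

lemma beta_ren {a b : Lam} (h : Beta a b) : ∀ f, Beta (ren f a) (ren f b) := by
  induction h with
  | beta t u => intro f; rw [ren_subst0]; exact Beta.beta _ _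
  | appL u _ ih => intro f; exact Beta.appL _ (ih f)
  | appR t _ ih => intro f; exact Beta.appR _ (ih f)
  | lam _ ih => intro f; exact Beta.lam (ih (sh f))

lemma beta_ren_inv (s : Lam) : ∀ f c, Beta (ren f s) c → ∃ s₁, Beta s s₁ ∧ c = ren f s₁ := by
  induction s with
  | var n => intro f c h; simp only [ren] at h; cases h
  | app s₁ s₂ ih₁ ih₂ =>
      intro f c h
      simp only [ren] at h
      generalize hq : ren f s₁ = q at h
      cases h with
      | beta t u =>
          cases s₁ with
          | var n => simp [ren] at hq
          | app a b => simp [ren] at hq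
          | lam s₀ =>
              simp only [ren, Lam.lam.injEq] at hq
              subst hq
              refine ⟨subst s₀ 0 s₂, Beta.beta _ _, ?_⟩
              rw [ren_subst0]
      | appL u hb =>
          rw [← hq] at hb
          obtain ⟨s₁', hb', rfl⟩ := ih₁ f _ hb
          exact ⟨app s₁' s₂, Beta.appL _ hb', rfl⟩
      | appR t hb =>
          obtain ⟨s₂', hb', rfl⟩ := ih₂ f _ hb
          exact ⟨app s₁ s₂', Beta.appR _ hb', by rw [← hq]; rfl⟩
  | lam s₀ ih =>
      intro f c h
      simp only [ren] at h
      cases h with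
      | lam hb =>
          obtain ⟨s₀', hb', rfl⟩ := ih (sh f) _ hb
          exact ⟨lam s₀', Beta.lam hb', rfl⟩

lemma betaStar_ren_inv {f : ℕ → ℕ} {s u : Lam} (h : BetaStar (ren f s) u) :
    ∃ s', BetaStar s s' ∧ u = ren f s' := by
  induction h with
  | refl => exact ⟨s, Relation.ReflTransGen.refl, rfl⟩
  | tail _ hb ih =>
      obtain ⟨s', hs', rfl⟩ := ih
      obtain ⟨s₂, hb₂, rfl⟩ := beta_ren_inv s' _ _ hb
      exact ⟨s₂, hs'.tail hb₂, rfl⟩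

lemma betaStar_lam {s s' : Lam} (h : BetaStar s s') : BetaStar (lam s) (lam s') := by
  induction h with
  | refl => exact Relation.ReflTransGen.refl
  | tail _ hb ih => exact ih.tail (Beta.lam hb)

lemma betaStar_appL {t t' : Lam} (u : Lam) (h : BetaStar t t') :
    BetaStar (app t u) (app t' u) := by
  induction h with
  | refl => exact Relation.ReflTransGen.refl
  | tail _ hb ih => exact ih.tail (Beta.appL _ hb)

lemma betaStar_appR (t : Lam) {u u' : Lam} (h : BetaStar u u') :
    BetaStar (app t u) (app t u') := by
  induction h with
  | refl => exact Relation.ReflTransGen.refl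
  | tail _ hb ih => exact ih.tail (Beta.appR _ hb)

lemma whr_beta {t u : Lam} (h : Whr t u) : Beta t u := by
  induction h with
  | head t u => exact Beta.beta t u
  | appL u _ ih => exact Beta.appL _ ih

lemma whrStar_betaStar {t u : Lam} (h : WhrStar t u) : BetaStar t u := by
  induction h with
  | refl => exact Relation.ReflTransGen.refl
  | tail _ hb ih => exact ih.tail (whr_beta hb)

lemma betaStar_betaEq {t u : Lam} (h : BetaStar t u) : BetaEq t u := by
  induction h with
  | refl => exact Relation.EqvGen.refl _
  | tail _ hb ih => exact ih.trans _ _ _ (Relation.EqvGen.rel _ _ hb)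

/-! #### Free variables -/

lemma mem_fv_ren (s : Lam) : ∀ f m, m ∈ fv s → f m ∈ fv (ren f s) := by
  induction s with
  | var n =>
      intro f m hm
      simp only [fv, Finset.mem_singleton] at hm
      subst hm; simp [fv, ren]
  | app t u iht ihu =>
      intro f m hm
      simp only [fv, ren, Finset.mem_union] at *
      rcases hm with h | h
      · exact Or.inl (iht f m h)
      · exact Or.inr (ihu f m h)
  | lam t ih =>
      intro f m hm
      simp only [fv, ren, Finset.mem_image, Finset.mem_erase] at *
      obtain ⟨j, ⟨hj0, hj⟩, rfl⟩ := hm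
      refine ⟨sh f j, ⟨?_, ih (sh f) j hj⟩, ?_⟩
      · cases j with
        | zero => omega
        | succ j => simp [sh]
      · cases j with
        | zero => omega
        | succ j => simp [sh]

lemma fv_lift_sub (t : Lam) :
    ∀ d m, m ∈ fv (lift d t) → (m < d ∧ m ∈ fv t) ∨ (d < m ∧ m - 1 ∈ fv t) := by
  induction t with
  | var n =>
      intro d m hm
      simp only [lift] at hm
      split at hm <;> simp [fv] at hm <;> subst hm <;> simp [fv] <;> omega
  | app t u iht ihu =>
      intro d m hm
      simp only [lift, fv, Finset.mem_union] at *
      rcases hm with h | h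
      · rcases iht d m h with ⟨h1, h2⟩ | ⟨h1, h2⟩
        · exact Or.inl ⟨h1, Or.inl h2⟩
        · exact Or.inr ⟨h1, Or.inl h2⟩
      · rcases ihu d m h with ⟨h1, h2⟩ | ⟨h1, h2⟩
        · exact Or.inl ⟨h1, Or.inr h2⟩
        · exact Or.inr ⟨h1, Or.inr h2⟩
  | lam t ih =>
      intro d m hm
      simp only [lift, fv, Finset.mem_image, Finset.mem_erase] at *
      obtain ⟨j, ⟨hj0, hj⟩, rfl⟩ := hm
      rcases ih (d + 1) j hj with ⟨h1, h2⟩ | ⟨h1, h2⟩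
      · exact Or.inl ⟨by omega, ⟨j, ⟨hj0, h2⟩, rfl⟩⟩
      · exact Or.inr ⟨by omega, ⟨j - 1, ⟨by omega, h2⟩, by omega⟩⟩

lemma fv_subst_sub (t : Lam) :
    ∀ k u m, m ∈ fv (subst t k u) →
      m ∈ fv u ∨ (m < k ∧ m ∈ fv t) ∨ (k ≤ m ∧ m + 1 ∈ fv t) := by
  induction t with
  | var n =>
      intro k u m hm
      simp only [subst] at hm
      split at hm
      · exact Or.inl hm
      · split at hm <;> simp [fv] at hm <;> subst hm <;> simp [fv] <;> omega
  | app t s iht ihs =>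
      intro k u m hm
      simp only [subst, fv, Finset.mem_union] at *
      rcases hm with h | h
      · rcases iht k u m h with h | ⟨h1, h2⟩ | ⟨h1, h2⟩
        · exact Or.inl h
        · exact Or.inr (Or.inl ⟨h1, Or.inl h2⟩)
        · exact Or.inr (Or.inr ⟨h1, Or.inl h2⟩)
      · rcases ihs k u m h with h | ⟨h1, h2⟩ | ⟨h1, h2⟩
        · exact Or.inl h
        · exact Or.inr (Or.inl ⟨h1, Or.inr h2⟩)
        · exact Or.inr (Or.inr ⟨h1, Or.inr h2⟩)
  | lam t ih =>
      intro k u m hm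
      simp only [subst, fv, Finset.mem_image, Finset.mem_erase] at *
      obtain ⟨j, ⟨hj0, hj⟩, rfl⟩ := hm
      rcases ih (k + 1) (lift 0 u) j hj with h | ⟨h1, h2⟩ | ⟨h1, h2⟩
      · rcases fv_lift_sub u 0 j h with ⟨h1, _⟩ | ⟨h1, h2⟩
        · omega
        · exact Or.inl h2
      · exact Or.inr (Or.inl ⟨by omega, ⟨j, ⟨hj0, h2⟩, rfl⟩⟩)
      · refine Or.inr (Or.inr ⟨by omega, ⟨j + 1, ⟨by omega, h2⟩, by omega⟩⟩)

lemma beta_fv_sub {a b : Lam} (h : Beta a b) : fv b ⊆ fv a := by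
  induction h with
  | beta t u =>
      intro m hm
      simp only [fv, Finset.mem_union, Finset.mem_image, Finset.mem_erase]
      rcases fv_subst_sub t 0 u m hm with h | ⟨h1, _⟩ | ⟨_, h2⟩
      · exact Or.inr h
      · omega
      · exact Or.inl ⟨m + 1, ⟨by omega, h2⟩, rfl⟩
  | appL u _ ih =>
      intro m hm
      simp only [fv, Finset.mem_union] at *
      tauto
  | appR t _ ih =>
      intro m hm
      simp only [fv, Finset.mem_union] at *
      tauto
  | lam _ ih =>
      intro m hm
      simp only [fv, Finset.mem_image, Finset.mem_erase] at *
      obtain ⟨j, ⟨hj0, hj⟩, rfl⟩ := hm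
      exact ⟨j, ⟨hj0, ih hj⟩, rfl⟩

lemma betaStar_fv_sub {a b : Lam} (h : BetaStar a b) : fv b ⊆ fv a := by
  induction h with
  | refl => exact fun _ h => h
  | tail _ hb ih => exact fun m hm => ih (beta_fv_sub hb hm)

/-! #### Normal forms and applications to a variable -/

lemma normal_of_ren {f : ℕ → ℕ} {s : Lam} (h : Normal (ren f s)) : Normal s := by
  intro u hu
  exact h (ren f u) (beta_ren hu f)

lemma normal_lam {s : Lam} (h : Normal s) : Normal (lam s) := by
  intro u hu
  cases hu with
  | lam hb => exact h _ hb

lemma normal_app_left {t u : Lam} (h : Normal (app t u)) : Normal t := by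
  intro t' ht'
  exact h _ (Beta.appL _ ht')

lemma normal_var (n : ℕ) : Normal (var n) := by
  intro u hu; cases hu

lemma appList_snoc (t : Lam) (l : List Lam) (s : Lam) :
    appList t (l ++ [s]) = app (appList t l) s := by
  simp [appList]

lemma appList_cons (t a : Lam) (l : List Lam) :
    appList t (a :: l) = appList (app t a) l := rfl

/-- Key extraction lemma: if `(t)(var y)` reduces to a normal term then so does `t`. -/
lemma extract_normal (y : ℕ) {c : Lam} (hc : Normal c) :
    ∀ {a : Lam}, BetaStar a c → ∀ t, a = app t (var y) →
      ∃ t', BetaStar t t' ∧ Normal t' := by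
  intro a h
  induction h using Relation.ReflTransGen.head_induction_on with
  | refl =>
      intro t ht
      subst ht
      exact ⟨t, Relation.ReflTransGen.refl, normal_app_left hc⟩
  | head hstep htail ih =>
      intro t ht
      subst ht
      cases hstep with
      | beta s u =>
          rw [subst_var_eq_ren] at htail
          obtain ⟨s', hs', rfl⟩ := betaStar_ren_inv htail
          exact ⟨lam s', betaStar_lam hs', normal_lam (normal_of_ren hc)⟩
      | appL _ hb =>
          obtain ⟨t', h1, h2⟩ := ih _ rfl
          exact ⟨t', Relation.ReflTransGen.head hb h1, h2⟩
      | appR _ hb => cases hb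

/-- Key extraction lemma: if `(t)(var y)` reduces to a term avoiding `F` then so does `t`. -/
lemma extract_closed (F : Finset ℕ) (y : ℕ) {c : Lam} (hc : ∀ m ∈ fv c, m ∉ F) :
    ∀ {a : Lam}, BetaStar a c → ∀ t, a = app t (var y) →
      ∃ t', BetaStar t t' ∧ ∀ m ∈ fv t', m ∉ F := by
  intro a h
  induction h using Relation.ReflTransGen.head_induction_on with
  | refl =>
      intro t ht
      subst ht
      refine ⟨t, Relation.ReflTransGen.refl, ?_⟩
      intro m hm
      exact hc m (by simp only [fv, Finset.mem_union]; exact Or.inl hm)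
  | head hstep htail ih =>
      intro t ht
      subst ht
      cases hstep with
      | beta s u =>
          rw [subst_var_eq_ren] at htail
          obtain ⟨s', hs', rfl⟩ := betaStar_ren_inv htail
          refine ⟨lam s', betaStar_lam hs', ?_⟩
          intro m hm
          simp only [fv, Finset.mem_image, Finset.mem_erase] at hm
          obtain ⟨j, ⟨hj0, hj⟩, rfl⟩ := hm
          have h1 := mem_fv_ren s' (sv 0 y) j hj
          have h2 : sv 0 y j = j - 1 := by
            simp only [sv]
            rw [if_neg hj0, if_neg (by omega)]
          rw [h2] at h1
          exact hc _ h1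
      | appL _ hb =>
          obtain ⟨t', h1, h2⟩ := ih _ rfl
          exact ⟨t', Relation.ReflTransGen.head hb h1, h2⟩
      | appR _ hb => cases hb

lemma normal_appList (l : List Lam) :
    ∀ t t', BetaStar t t' → Normal t' → (∀ s, t' ≠ lam s) →
      (∀ a ∈ l, Normalizable a) →
      ∃ r, BetaStar (appList t l) r ∧ Normal r ∧ (∀ s, r ≠ lam s) := by
  induction l with
  | nil => intro t t' h hn hnl _; exact ⟨t', h, hn, hnl⟩
  | cons a l ih =>
      intro t t' h hn hnl hargs
      obtain ⟨a', ha', hna'⟩ := hargs a List.mem_cons_self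
      have h1 : BetaStar (app t a) (app t' a') :=
        (betaStar_appL a h).trans (betaStar_appR t' ha')
      have hn1 : Normal (app t' a') := by
        intro u hu
        cases hu with
        | beta s u => exact absurd rfl (hnl s)
        | appL _ hb => exact hn _ hb
        | appR _ hb => exact hna' _ hb
      rw [appList_cons]
      exact ih (app t a) (app t' a') h1 hn1 (by intro s hs; cases hs)
        (fun b hb => hargs b (List.mem_cons_of_mem _ hb))

lemma closed_appList (F : Finset ℕ) (l : List Lam) :
    ∀ t t', BetaStar t t' → (∀ m ∈ fv t', m ∉ F) →
      (∀ a ∈ l, ∃ a', BetaStar a a' ∧ ∀ m ∈ fv a', m ∉ F) →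
      ∃ r, BetaStar (appList t l) r ∧ ∀ m ∈ fv r, m ∉ F := by
  induction l with
  | nil => intro t t' h hf _; exact ⟨t', h, hf⟩
  | cons a l ih =>
      intro t t' h hf hargs
      obtain ⟨a', ha', hfa'⟩ := hargs a List.mem_cons_self
      have h1 : BetaStar (app t a) (app t' a') :=
        (betaStar_appL a h).trans (betaStar_appR t' ha')
      have hf1 : ∀ m ∈ fv (app t' a'), m ∉ F := by
        intro m hm
        simp only [fv, Finset.mem_union] at hm
        rcases hm with hm | hm
        · exact hf m hm
        · exact hfa' m hm
      rw [appList_cons]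
      exact ih _ _ h1 hf1 (fun b hb => hargs b (List.mem_cons_of_mem _ hb))

end Lam

/-! #### Saturated interpretations and the main lemma -/

lemma saturated_normalizable : Saturated {t : Lam | t.Normalizable} := by
  intro t u hw hu
  obtain ⟨n, hn, hnorm⟩ := hu
  exact ⟨n, (Lam.whrStar_betaStar hw).trans hn, hnorm⟩

lemma saturated_closedred (F : Finset ℕ) :
    Saturated {t : Lam | ∃ t', Lam.BetaStar t t' ∧ ∀ m ∈ t'.fv, m ∉ F} := by
  intro t u hw hu
  obtain ⟨t', h1, h2⟩ := hu
  exact ⟨t', (Lam.whrStar_betaStar hw).trans h1, h2⟩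

lemma interp_cons_const (G : Set Lam) :
    Interp.cons G (fun _ => G) = (fun _ => G) := by
  funext n; cases n <;> rfl

/-- The mutual positive/negative realizability lemma. -/
lemma main_posneg (G : Set Lam) (hGsat : Saturated G) (y : ℕ)
    (hvar : ∀ l : List Lam, (∀ a ∈ l, a ∈ G) → Lam.appList (Lam.var y) l ∈ G)
    (hext : ∀ t : Lam, Lam.app t (Lam.var y) ∈ G → t ∈ G) :
    ∀ A : Ty,
      (PosTy A → ∀ t ∈ interpC Saturated A (fun _ => G), t ∈ G) ∧
      (NegTy A → ∀ l : List Lam, (∀ a ∈ l, a ∈ G) →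
        Lam.appList (Lam.var y) l ∈ interpC Saturated A (fun _ => G)) := by
  intro A
  induction A with
  | var n =>
      exact ⟨fun _ t ht => ht, fun _ l hl => hvar l hl⟩
  | arr B P ihB ihP =>
      constructor
      · intro hpos t ht
        cases hpos with
        | arr hB hP =>
            have hy : Lam.var y ∈ interpC Saturated B (fun _ => G) :=
              ihB.2 hB [] (by intro a ha; cases ha)
            have h2 : Lam.app t (Lam.var y) ∈ interpC Saturated P (fun _ => G) :=
              ht (Lam.var y) hy
            exact hext t (ihP.1 hP _ h2)
      · intro hneg l hl
        cases hneg with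
        | arr hB hP =>
            intro s hs
            have hsG : s ∈ G := ihB.1 hB s hs
            have hmem : Lam.appList (Lam.var y) (l ++ [s]) ∈
                interpC Saturated P (fun _ => G) := by
              refine ihP.2 hP (l ++ [s]) ?_
              intro a ha
              rcases List.mem_append.1 ha with ha | ha
              · exact hl a ha
              · rw [List.mem_singleton] at ha; subst ha; exact hsG
            rw [Lam.appList_snoc] at hmem
            exact hmem
  | all A ihA =>
      constructor
      · intro hpos t ht
        cases hpos with
        | all hA _ =>
            simp only [interpC] at ht
            have h1 := Set.mem_iInter.1 ht G
            have h2 := Set.mem_iInter.1 h1 hGsat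
            rw [interp_cons_const] at h2
            exact ihA.1 hA t h2
      · intro hneg; cases hneg


/-- Corollary 1(i): if `A` is ∀⁺ and `t ∈ |A|`, then `t` is
normalizable and β-equivalent to a closed term. -/
theorem normalizable_and_closed (A : Ty) (hA : PosTy A) (t : Lam) (ht : t ∈ Sem A) :
    t.Normalizable ∧ ∃ t', Lam.BetaEq t t' ∧ t'.fv = ∅ := by
  constructor
  · -- normalizability
    have hsat : ∀ n : ℕ, Saturated ((fun _ => {t : Lam | t.Normalizable}) n) :=
      fun _ => saturated_normalizable
    have h1 := ht (fun _ => {t : Lam | t.Normalizable}) hsat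
    refine (main_posneg _ saturated_normalizable 0 ?_ ?_ A).1 hA t h1
    · intro l hl
      obtain ⟨r, h1, h2, _⟩ := Lam.normal_appList l (Lam.var 0) (Lam.var 0)
        Relation.ReflTransGen.refl (Lam.normal_var 0) (by intro s hs; cases hs) hl
      exact ⟨r, h1, h2⟩
    · intro u hu
      obtain ⟨c, hc, hn⟩ := hu
      obtain ⟨t', hr1, hr2⟩ := Lam.extract_normal 0 hn hc u rfl
      exact ⟨t', hr1, hr2⟩
  · -- β-equivalence with a closed term
    obtain ⟨y, hy⟩ := Infinite.exists_notMem_finset t.fv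
    set F := t.fv with hF
    set S : Set Lam := {u : Lam | ∃ u', Lam.BetaStar u u' ∧ ∀ m ∈ u'.fv, m ∉ F} with hS
    have hsat : ∀ n : ℕ, Saturated ((fun _ => S) n) := fun _ => saturated_closedred F
    have h1 := ht (fun _ => S) hsat
    have h2 : t ∈ S := by
      refine (main_posneg S (saturated_closedred F) y ?_ ?_ A).1 hA t h1
      · intro l hl
        exact Lam.closed_appList F l (Lam.var y) (Lam.var y) Relation.ReflTransGen.refl
          (by intro m hm; simp only [Lam.fv, Finset.mem_singleton] at hm; subst hm; exact hy) hl
      · intro u hu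
        obtain ⟨c, hc, hfc⟩ := hu
        exact Lam.extract_closed F y hfc hc u rfl
    obtain ⟨t', hred, hfv⟩ := h2
    refine ⟨t', Lam.betaStar_betaEq hred, ?_⟩
    rw [Finset.eq_empty_iff_forall_notMem]
    intro m hm
    exact hfv m hm (Lam.betaStar_fv_sub hred hm)
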